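/- For any integer n, the set B = {n, n+1} is saturating: defining B_0 = B and B_k = B_{k-1} ∪ {2k' - l : k' ∈ B_0, l ∈ B_{k-1}}, the union of all B_k equals ℤ. In fact, B_k contains all integers in the interval [n-k, n+k+1]. -/
import Mathlib

/-- Iterated saturation extension: `satIter B0 0 = B0`,
`satIter B0 (k+1) = satIter B0 k ∪ {2m - l : m ∈ B0, l ∈ satIter B0 k}`. -/
def satIter (B0 : Set ℤ) : ℕ → Set ℤ
  | 0 => B0
  | k + 1 => satIter B0 k ∪ {x | ∃ m ∈ B0, ∃ l ∈ satIter B0 k, x = 2 * m - l}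

/-- For any integer `n`, the set `{n, n+1}` is saturating, and in fact the `k`-th
iterate contains all integers in `[n-k, n+k+1]`. -/
theorem stmt0 (n : ℤ) :
    (⋃ k : ℕ, satIter {n, n + 1} k) = Set.univ ∧
    ∀ k : ℕ, ∀ x : ℤ, n - (k : ℤ) ≤ x → x ≤ n + (k : ℤ) + 1 →
      x ∈ satIter {n, n + 1} k := by
  have key : ∀ k : ℕ, ∀ x : ℤ, n - (k : ℤ) ≤ x → x ≤ n + (k : ℤ) + 1 →
      x ∈ satIter {n, n + 1} k := by
    intro k
    induction k with
    | zero =>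
      intro x h1 h2
      simp only [Nat.cast_zero, sub_zero, add_zero] at h1 h2
      have : x = n ∨ x = n + 1 := by omega
      rcases this with h | h <;> simp [satIter, h]
    | succ k ih =>
      intro x h1 h2
      push_cast at h1 h2 ⊢
      by_cases hlo : n - k ≤ x
      · by_cases hhi : x ≤ n + k + 1
        · exact Or.inl (ih x hlo hhi)
        · -- x = n + k + 2, use m = n+1, l = n - k
          have hx : x = n + k + 2 := by omega
          refine Or.inr ⟨n + 1, Or.inr rfl, n - k, ih (n - k) (by omega) (by omega), by omega⟩
      · -- x = n - k - 1, use m = n, l = n + k + 1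
        have hx : x = n - k - 1 := by omega
        refine Or.inr ⟨n, Or.inl rfl, n + k + 1, ih (n + k + 1) (by omega) (by omega), by omega⟩
  refine ⟨?_, key⟩
  ext x
  simp only [Set.mem_iUnion, Set.mem_univ, iff_true]
  rcases le_or_gt n x with h | h
  · exact ⟨(x - n).toNat, key _ x (by omega) (by omega)⟩
  · exact ⟨(n - x).toNat, key _ x (by omega) (by omega)⟩
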